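/- Static form of the LMP 2/(1−δ)-approximation guarantee: let δ ∈ [0,1), f ≥ 0, let S ⊆ F be nonempty, and let α : D → ℝ satisfy (i) Σ_{j∈D} α_j ≥ (1−δ)·Σ_{j∈D} d(j,S) + 2f·|S|, and (ii) Σ_{j∈D} [α_j − 2·d(i,j)]⁺ ≤ 2f for every i ∈ F. Then for every nonempty T ⊆ F, (1−δ)·Σ_{j∈D} d(j,S) ≤ 2·( Σ_{j∈D} d(j,T) + f·|T| − f·|S| ). In particular, if |S| = k with 1 ≤ k ≤ |F|, then cost(S) ≤ (2/(1−δ))·opt_k. -/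

import Mathlib

open Finset

/-- `d(p,S)`: distance from `p` to the closest point of `S` (junk `0` if `S = ∅`). -/
noncomputable def dS {X : Type*} [MetricSpace X] (p : X) (S : Finset X) : ℝ :=
  if h : S.Nonempty then S.inf' h (fun c => dist p c) else 0

/-- `cost(S) = Σ_{p∈D} d(p,S)`. -/
noncomputable def kmCost {X : Type*} [MetricSpace X] (D S : Finset X) : ℝ :=
  ∑ p ∈ D, dS p S

/-- `opt_k = min{cost(T) : T ⊆ F, |T| = k}`. -/
noncomputable def kmOpt {X : Type*} [MetricSpace X] (D F : Finset X) (k : ℕ) : ℝ :=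
  sInf {c : ℝ | ∃ T : Finset X, T ⊆ F ∧ T.card = k ∧ kmCost D T = c}

/-- Static form of the LMP `2/(1−δ)`-approximation guarantee: if the dual values `α`
pay for the `(1−δ)`-scaled connection cost of `S` plus its opening cost `2f·|S|`, and
`α/2` is a feasible dual for opening cost `f` after doubling distances, then for every
nonempty `T ⊆ F` one has `(1−δ)·cost(S) ≤ 2·(cost(T) + f·|T| − f·|S|)`;
in particular, if `|S| = k` with `1 ≤ k ≤ |F|` then `cost(S) ≤ (2/(1−δ))·opt_k`. -/
theorem lmp_static_guarantee {X : Type*} [MetricSpace X]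
    (D F S : Finset X) (hD : D.Nonempty) (hF : F.Nonempty)
    (hSF : S ⊆ F) (hSne : S.Nonempty)
    (δ f : ℝ) (hδ0 : 0 ≤ δ) (hδ1 : δ < 1) (hf : 0 ≤ f) (α : X → ℝ)
    (hpay : (1 - δ) * (∑ j ∈ D, dS j S) + 2 * f * S.card ≤ ∑ j ∈ D, α j)
    (hdual : ∀ i ∈ F, ∑ j ∈ D, max (α j - 2 * dist i j) 0 ≤ 2 * f) :
    (∀ T : Finset X, T ⊆ F → T.Nonempty →
      (1 - δ) * (∑ j ∈ D, dS j S) ≤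
        2 * ((∑ j ∈ D, dS j T) + f * T.card - f * S.card)) ∧
    (∀ k : ℕ, 1 ≤ k → k ≤ F.card → S.card = k →
      kmCost D S ≤ (2 / (1 - δ)) * kmOpt D F k) := by

  have hmain : ∀ T : Finset X, T ⊆ F → T.Nonempty →
      (1 - δ) * (∑ j ∈ D, dS j S) ≤
        2 * ((∑ j ∈ D, dS j T) + f * T.card - f * S.card) := by
    intro T hTF hTne
    have key : ∀ j ∈ D, α j ≤ 2 * dS j T + ∑ i ∈ T, max (α j - 2 * dist i j) 0 := by
      intro j _
      obtain ⟨i, hi, hdi⟩ : ∃ i ∈ T, dS j T = dist j i := by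
        simp only [dS, dif_pos hTne]
        obtain ⟨i, hi, hmin⟩ := T.exists_mem_eq_inf' hTne (fun c => dist j c)
        exact ⟨i, hi, hmin⟩
      have h1 : max (α j - 2 * dist i j) 0 ≤ ∑ i ∈ T, max (α j - 2 * dist i j) 0 :=
        Finset.single_le_sum (f := fun i => max (α j - 2 * dist i j) 0)
          (fun i _ => le_max_right _ _) hi
      have h2 : α j - 2 * dist i j ≤ max (α j - 2 * dist i j) 0 := le_max_left _ _
      have h3 : dist i j = dist j i := dist_comm i j
      linarith
    have hsum : ∑ j ∈ D, α j ≤ 2 * (∑ j ∈ D, dS j T) + 2 * f * T.card := by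
      calc ∑ j ∈ D, α j ≤ ∑ j ∈ D, (2 * dS j T + ∑ i ∈ T, max (α j - 2 * dist i j) 0) :=
            Finset.sum_le_sum key
        _ = 2 * (∑ j ∈ D, dS j T) + ∑ i ∈ T, ∑ j ∈ D, max (α j - 2 * dist i j) 0 := by
            rw [Finset.sum_add_distrib, Finset.mul_sum, Finset.sum_comm]
        _ ≤ 2 * (∑ j ∈ D, dS j T) + ∑ i ∈ T, 2 * f := by
            gcongr with i hi
            exact hdual i (hTF hi)
        _ = 2 * (∑ j ∈ D, dS j T) + 2 * f * T.card := by
            rw [Finset.sum_const, nsmul_eq_mul]; ring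
    linarith
  refine ⟨hmain, ?_⟩
  intro k hk1 hkF hSk
  have h2δ : (0:ℝ) < 2 / (1 - δ) := div_pos two_pos (by linarith)
  have hset : ∀ c ∈ {c : ℝ | ∃ T : Finset X, T ⊆ F ∧ T.card = k ∧ kmCost D T = c},
      (1 - δ) / 2 * kmCost D S ≤ c := by
    rintro c ⟨T, hTF, hTk, rfl⟩
    have hTne : T.Nonempty := Finset.card_pos.mp (by omega)
    have := hmain T hTF hTne
    rw [hSk, hTk] at this
    simp only [kmCost]
    nlinarith [this]
  have hne : {c : ℝ | ∃ T : Finset X, T ⊆ F ∧ T.card = k ∧ kmCost D T = c}.Nonempty :=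
    ⟨kmCost D S, S, hSF, hSk, rfl⟩
  have hinf : (1 - δ) / 2 * kmCost D S ≤ kmOpt D F k := le_csInf hne hset
  have := mul_le_mul_of_nonneg_left hinf (le_of_lt h2δ)
  calc kmCost D S = 2 / (1 - δ) * ((1 - δ) / 2 * kmCost D S) := by
        have h1δ : (1:ℝ) - δ ≠ 0 := by linarith
        field_simp
    _ ≤ 2 / (1 - δ) * kmOpt D F k := this
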